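/- arXiv:2002.12892 — 2 statements merged into one kernel-verified Lean document; each statement's English description precedes it below -/
import Mathlib

section
/- Let q = p^e with p an odd prime, and assume 2l | e. Set y = (q−1)/(p^l − 1). Let m | (q−1), m_1 = m/gcd(m,y), and let n = rm where 1 ≤ r ≤ (p^l − 1)/m_1. Then for any 1 ≤ k ≤ ⌊(p^l + n)/(p^l + 1)⌋ and any 0 ≤ h ≤ k, there exists an [n+1,k]_q MDS linear code C over F_q whose l-Galois hull Hull_l(C) = C ∩ C^{⊥_l} has dimension exactly h. -/
open Finset

/-- The Hamming weight of a vector: the number of nonzero coordinates. -/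
noncomputable def wt {F : Type*} [Zero F] {n : ℕ} (x : Fin n → F) : ℕ :=
  Set.ncard {i | x i ≠ 0}

/-- The `l`-Galois dual of a linear code `C ⊆ F^n` over a field `F` of characteristic `p`:
the set of `x` with `∑ i, y i * (x i)^(p^l) = 0` for all codewords `y ∈ C`. -/
def galoisDual (p l : ℕ) [Fact p.Prime] {F : Type*} [Field F] [CharP F p] {n : ℕ}
    (C : Submodule F (Fin n → F)) : Submodule F (Fin n → F) where
  carrier := {x | ∀ y ∈ C, ∑ i, y i * x i ^ p ^ l = 0}
  zero_mem' := by
    intro y _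
    have hp : p ^ l ≠ 0 := pow_ne_zero _ (Fact.out (p := p.Prime)).ne_zero
    simp [zero_pow hp]
  add_mem' := by
    intro a b ha hb y hy
    have h : ∀ i : Fin _, (a + b) i ^ p ^ l = a i ^ p ^ l + b i ^ p ^ l := by
      intro i
      simpa using add_pow_char_pow (a i) (b i) (p := p) (n := l)
    calc ∑ i, y i * (a + b) i ^ p ^ l
        = (∑ i, y i * a i ^ p ^ l) + ∑ i, y i * b i ^ p ^ l := by
          rw [← Finset.sum_add_distrib]; exact Finset.sum_congr rfl fun i _ => by
            rw [h i, mul_add]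
      _ = 0 := by rw [ha y hy, hb y hy, add_zero]
  smul_mem' := by
    intro c x hx y hy
    have h : ∀ i : Fin _, (c • x) i ^ p ^ l = c ^ p ^ l * x i ^ p ^ l := by
      intro i; simp [mul_pow]
    calc ∑ i, y i * (c • x) i ^ p ^ l
        = c ^ p ^ l * ∑ i, y i * x i ^ p ^ l := by
          rw [Finset.mul_sum]; exact Finset.sum_congr rfl fun i _ => by rw [h i]; ring
      _ = 0 := by rw [hx y hy, mul_zero]

/-- The `l`-Galois hull `Hull_l(C) = C ∩ C^{⊥_l}` of a linear code. -/
def galoisHull (p l : ℕ) [Fact p.Prime] {F : Type*} [Field F] [CharP F p] {n : ℕ}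
    (C : Submodule F (Fin n → F)) : Submodule F (Fin n → F) :=
  C ⊓ galoisDual p l C

/-- `C` is an `[n, k]` MDS code: it has dimension `k` and minimum Hamming distance
exactly `n - k + 1`. -/
def IsMDSCode {F : Type*} [Field F] {n : ℕ} (C : Submodule F (Fin n → F)) (k : ℕ) : Prop :=
  Module.finrank F C = k ∧
    (∀ x ∈ C, x ≠ 0 → n - k + 1 ≤ wt x) ∧
    (∃ x ∈ C, x ≠ 0 ∧ wt x = n - k + 1)

section AuxLemmas
open Polynomial
variable {F : Type*} [Field F]

lemma keyIdentity {N : ℕ} (a : Fin (N+1) → F) (ha : Function.Injective a)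
    (T : F[X]) (hT : T.natDegree < N) :
    ∑ i, (∏ j ∈ Finset.univ.erase i, (a i - a j))⁻¹ * T.eval (a i) = 0 := by
  classical
  set Pi : Fin (N+1) → F[X] := fun i => ∏ j ∈ Finset.univ.erase i, (X - C (a j)) with hPi
  have hmono : ∀ i, (Pi i).Monic := fun i =>
    monic_prod_of_monic _ _ (fun j _ => monic_X_sub_C (a j))
  have hdeg : ∀ i, (Pi i).natDegree = N := by
    intro i
    rw [hPi]
    rw [natDegree_prod _ _ (fun j _ => X_sub_C_ne_zero (a j))]
    simp [Finset.card_erase_of_mem]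
  set π : Fin (N+1) → F := fun i => ∏ j ∈ Finset.univ.erase i, (a i - a j) with hπ
  have hπeval : ∀ i, (Pi i).eval (a i) = π i := by
    intro i; rw [hPi, eval_prod]; simp [hπ]
  have hπ0 : ∀ i, π i ≠ 0 := by
    intro i
    rw [hπ, Finset.prod_ne_zero_iff]
    intro j hj
    exact sub_ne_zero.2 fun hc => (Finset.mem_erase.1 hj).1 (ha hc).symm
  set L : F[X] := ∑ i, C (T.eval (a i) * (π i)⁻¹) * Pi i with hL
  have hLeval : ∀ i₀, L.eval (a i₀) = T.eval (a i₀) := by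
    intro i₀
    rw [hL, eval_finset_sum]
    rw [Finset.sum_eq_single i₀]
    · rw [eval_mul, eval_C, hπeval, mul_assoc, inv_mul_cancel₀ (hπ0 i₀), mul_one]
    · intro i _ hii
      rw [eval_mul, hPi]
      have : eval (a i₀) (∏ j ∈ Finset.univ.erase i, (X - C (a j))) = 0 := by
        rw [eval_prod]
        refine Finset.prod_eq_zero (Finset.mem_erase.2 ⟨fun hc => hii hc.symm, Finset.mem_univ i₀⟩) ?_
        simp
      rw [this, mul_zero]
    · intro h; exact absurd (Finset.mem_univ i₀) h
  have hLdeg : L.natDegree ≤ N := by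
    refine natDegree_sum_le_of_forall_le _ _ (fun i _ => ?_)
    calc (C (T.eval (a i) * (π i)⁻¹) * Pi i).natDegree ≤ (Pi i).natDegree :=
          natDegree_C_mul_le _ _
    _ = N := hdeg i
  have hLT : L = T := by
    have h0 : L - T = 0 := by
      refine eq_zero_of_natDegree_lt_card_of_eval_eq_zero (L - T) ha (fun i => ?_) ?_
      · rw [eval_sub, hLeval, sub_self]
      · calc (L - T).natDegree ≤ max L.natDegree T.natDegree := natDegree_sub_le _ _
        _ < N + 1 := by
            rw [max_lt_iff]; exact ⟨Nat.lt_succ_of_le hLdeg, Nat.lt_succ_of_lt hT⟩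
        _ = Fintype.card (Fin (N+1)) := by simp
    exact sub_eq_zero.1 h0
  have hcoeff : T.coeff N = 0 := coeff_eq_zero_of_natDegree_lt hT
  have : L.coeff N = ∑ i, T.eval (a i) * (π i)⁻¹ := by
    rw [hL, finset_sum_coeff]
    refine Finset.sum_congr rfl (fun i _ => ?_)
    rw [coeff_C_mul]
    have : (Pi i).coeff N = 1 := by
      have := (hmono i).coeff_natDegree
      rwa [hdeg i] at this
    rw [this, mul_one]
  rw [hLT, hcoeff] at this
  calc ∑ i, (∏ j ∈ Finset.univ.erase i, (a i - a j))⁻¹ * T.eval (a i)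
      = ∑ i, T.eval (a i) * (π i)⁻¹ := Finset.sum_congr rfl (fun i _ => mul_comm _ _)
    _ = 0 := this.symm

lemma prod_X_sub_C_dvd_of_eval_eq_zero {ι : Type*} [DecidableEq ι] (s : Finset ι) (a : ι → F)
    (ha : Set.InjOn a s) (f : F[X]) (hf : ∀ i ∈ s, f.eval (a i) = 0) :
    (∏ i ∈ s, (X - C (a i))) ∣ f := by
  classical
  induction s using Finset.induction_on generalizing f with
  | empty => simpa using one_dvd f
  | @insert i₀ s hi₀ ih =>
    have h1 : (X - C (a i₀)) ∣ f := dvd_iff_isRoot.2 (hf i₀ (Finset.mem_insert_self _ _))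
    obtain ⟨f₁, rfl⟩ := h1
    have h2 : ∀ i ∈ s, f₁.eval (a i) = 0 := by
      intro i hi
      have h3 := hf i (Finset.mem_insert_of_mem hi)
      rw [eval_mul, eval_sub, eval_X, eval_C] at h3
      have h4 : a i - a i₀ ≠ 0 := sub_ne_zero.2 fun hc =>
        hi₀ (by rwa [ha (Finset.mem_insert_of_mem hi) (Finset.mem_insert_self _ _) hc] at hi)
      exact (mul_eq_zero.1 h3).resolve_left h4
    rw [Finset.prod_insert hi₀]
    exact mul_dvd_mul_left _ (ih (ha.mono (by simp [Finset.subset_insert])) f₁ h2)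

lemma prod_lin_eq_X_pow_sub (m : ℕ) (hm : 0 < m) (c μ : Fˣ) (hμ : orderOf μ = m) :
    ∏ t : Fin m, (X - C ((c * μ^(t:ℕ) : Fˣ) : F)) = X^m - C ((c^m : Fˣ) : F) := by
  classical
  have hmu : (μ:F)^m = 1 := by
    have := pow_orderOf_eq_one μ; rw [hμ] at this
    calc (μ:F)^m = ((μ^m : Fˣ) : F) := by rw [Units.val_pow_eq_pow_val]
    _ = 1 := by rw [this, Units.val_one]
  have hroot : ∀ t : Fin m, ((c * μ^(t:ℕ) : Fˣ) : F)^m = ((c^m : Fˣ) : F) := by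
    intro t
    push_cast
    rw [mul_pow, ← pow_mul, mul_comm (t:ℕ) m, pow_mul, hmu, one_pow, mul_one]
  have hinj : Function.Injective (fun t : Fin m => ((c * μ^(t:ℕ) : Fˣ) : F)) := by
    intro t t' htt
    have h1 : (c * μ^(t:ℕ)) = (c * μ^(t':ℕ)) := Units.ext htt
    have h2 : μ^(t:ℕ) = μ^(t':ℕ) := mul_left_cancel h1
    have := pow_injOn_Iio_orderOf (x := μ) (by rw [hμ]; exact t.isLt) (by rw [hμ]; exact t'.isLt) h2
    exact Fin.ext this
  set D := (X^m - C ((c^m : Fˣ) : F)) - ∏ t : Fin m, (X - C ((c * μ^(t:ℕ) : Fˣ) : F)) with hD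
  by_cases h0 : D = 0
  · exact (sub_eq_zero.1 h0).symm
  exfalso
  have hmonic1 : (X^m - C ((c^m : Fˣ) : F)).Monic := monic_X_pow_sub_C _ hm.ne'
  have hmonic2 : (∏ t : Fin m, (X - C ((c * μ^(t:ℕ) : Fˣ) : F))).Monic :=
    monic_prod_of_monic _ _ (fun t _ => monic_X_sub_C _)
  have hd1 : (X^m - C ((c^m : Fˣ) : F)).natDegree = m := natDegree_X_pow_sub_C
  have hd2 : (∏ t : Fin m, (X - C ((c * μ^(t:ℕ) : Fˣ) : F))).natDegree = m := by
    rw [natDegree_prod _ _ (fun t _ => X_sub_C_ne_zero _)]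
    have h5 : ∀ t : Fin m, (X - C ((c * μ^(t:ℕ) : Fˣ) : F)).natDegree = 1 :=
      fun t => natDegree_X_sub_C _
    rw [Finset.sum_congr rfl (fun t _ => h5 t)]
    simp
  have hdeglt : D.degree < (X^m - C ((c^m : Fˣ) : F)).degree := by
    refine degree_sub_lt ?_ hmonic1.ne_zero ?_
    · rw [degree_eq_natDegree hmonic1.ne_zero, degree_eq_natDegree hmonic2.ne_zero, hd1, hd2]
    · rw [hmonic1.leadingCoeff, hmonic2.leadingCoeff]
  have hnd : D.natDegree < m := by
    rw [degree_eq_natDegree hmonic1.ne_zero, hd1] at hdeglt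
    exact (natDegree_lt_iff_degree_lt h0).2 hdeglt
  have := eq_zero_of_natDegree_lt_card_of_eval_eq_zero D hinj (fun t => ?_) ?_
  · exact h0 this
  · rw [hD, eval_sub, eval_sub, eval_pow, eval_X, eval_C, hroot t, sub_self, eval_prod, zero_sub,
      neg_eq_zero]
    exact Finset.prod_eq_zero (Finset.mem_univ t) (by simp)
  · simpa using hnd

lemma prod_erase_eval (m : ℕ) (hm : 0 < m) (c μ : Fˣ) (hμ : orderOf μ = m) (t₀ : Fin m) :
    ∏ t ∈ Finset.univ.erase t₀, (((c * μ^(t₀:ℕ) : Fˣ) : F) - ((c * μ^(t:ℕ) : Fˣ) : F))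
      = (m : F) * ((c * μ^(t₀:ℕ) : Fˣ) : F)^(m-1) := by
  classical
  set aa : F := ((c * μ^(t₀:ℕ) : Fˣ) : F) with haa
  have haa0 : aa ≠ 0 := Units.ne_zero _
  have hroot : aa^m = ((c^m : Fˣ) : F) := by
    have hmu : (μ:F)^m = 1 := by
      have h1 := pow_orderOf_eq_one μ; rw [hμ] at h1
      calc (μ:F)^m = ((μ^m : Fˣ) : F) := by rw [Units.val_pow_eq_pow_val]
      _ = 1 := by rw [h1, Units.val_one]
    rw [haa]
    push_cast
    rw [mul_pow, ← pow_mul, mul_comm (t₀:ℕ) m, pow_mul, hmu, one_pow, mul_one]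
  set T : F[X] := C (aa^(m-1)) * ∑ i ∈ Finset.range m, (C aa⁻¹ * X)^i with hT
  have claim1 : (X - C aa) * T = X^m - C ((c^m : Fˣ) : F) := by
    have e1 : (X - C aa) = C aa * (C aa⁻¹ * X - 1) := by
      rw [mul_sub, ← mul_assoc, ← C_mul, mul_inv_cancel₀ haa0, C_1, one_mul, mul_one]
    rw [e1, hT]
    calc C aa * (C aa⁻¹ * X - 1) * (C (aa^(m-1)) * ∑ i ∈ Finset.range m, (C aa⁻¹ * X)^i)
        = C aa * C (aa^(m-1)) * ((∑ i ∈ Finset.range m, (C aa⁻¹ * X)^i) * (C aa⁻¹ * X - 1)) := by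
          ring
      _ = C (aa^m) * ((C aa⁻¹ * X)^m - 1) := by
          rw [geom_sum_mul, ← C_mul, ← pow_succ', Nat.sub_add_cancel hm]
      _ = X^m - C ((c^m : Fˣ) : F) := by
          have e3 : aa^m * aa⁻¹^m = 1 := by
            rw [inv_pow, mul_inv_cancel₀ (pow_ne_zero _ haa0)]
          rw [mul_pow, ← C_pow, mul_sub, ← mul_assoc, ← C_mul, e3, C_1, one_mul, mul_one, hroot]
  have claim2 : (X - C aa) * ∏ t ∈ Finset.univ.erase t₀, (X - C ((c * μ^(t:ℕ) : Fˣ) : F))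
      = X^m - C ((c^m : Fˣ) : F) := by
    rw [← prod_lin_eq_X_pow_sub m hm c μ hμ, haa]
    exact Finset.mul_prod_erase Finset.univ
      (fun t : Fin m => X - C ((c * μ^(t:ℕ) : Fˣ) : F)) (Finset.mem_univ t₀)
  have hcancel : ∏ t ∈ Finset.univ.erase t₀, (X - C ((c * μ^(t:ℕ) : Fˣ) : F)) = T :=
    mul_left_cancel₀ (X_sub_C_ne_zero aa) (claim2.trans claim1.symm)
  have := congrArg (Polynomial.eval aa) hcancel
  rw [eval_prod] at this
  simp only [eval_sub, eval_X, eval_C] at this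
  rw [this, hT, eval_mul, eval_C, eval_finset_sum]
  have e2 : ∀ i ∈ Finset.range m, ((C aa⁻¹ * X : F[X])^i).eval aa = 1 := by
    intro i _
    rw [eval_pow, eval_mul, eval_C, eval_X, inv_mul_cancel₀ haa0, one_pow]
  rw [Finset.sum_congr rfl e2]
  simp [mul_comm]

end AuxLemmas

open Polynomial in
lemma constructionM (p l : ℕ) [Fact p.Prime] {F : Type*} [Field F] [CharP F p]
    (N k h : ℕ) (a : Fin (N+1) → F) (ha : Function.Injective a)
    (v : Fin (N+1) → F) (hv0 : ∀ i, v i ≠ 0)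
    (S : Finset (Fin (N+1))) (hS : S.card = k - h) (α : F) (hα : α ≠ 1)
    (hv : ∀ i, (v i)^(p^l+1) * (∏ j ∈ Finset.univ.erase i, (a i - a j))
          = if i ∈ S then α else 1)
    (hk1 : 1 ≤ k) (hkh : h ≤ k) (hkN : (k-1)*(p^l+1)+1 ≤ N) :
    ∃ C : Submodule F (Fin (N+1) → F), IsMDSCode C k ∧
      Module.finrank F (galoisHull p l C) = h := by
  classical
  set Q := p ^ l with hQdef
  have hQ1 : 1 ≤ Q := Nat.one_le_iff_ne_zero.2 (pow_ne_zero _ (Fact.out (p := p.Prime)).ne_zero)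
  have hkN' : k ≤ N := by
    have h1 : (k-1) * 1 ≤ (k-1)*(Q+1) := Nat.mul_le_mul_left _ (by omega)
    omega
  -- the products π i
  set π : Fin (N+1) → F := fun i => ∏ j ∈ Finset.univ.erase i, (a i - a j) with hπ
  have hπ0 : ∀ i, π i ≠ 0 := by
    intro i
    rw [hπ, Finset.prod_ne_zero_iff]
    intro j hj
    exact sub_ne_zero.2 fun hc => (Finset.mem_erase.1 hj).1 (ha hc).symm
  have hv' : ∀ i, (v i)^(Q+1) = (if i ∈ S then α else 1) * (π i)⁻¹ := by
    intro i
    exact (eq_mul_inv_iff_mul_eq₀ (hπ0 i)).2 (hv i)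
  -- the evaluation encoding map
  set ev : F[X] →ₗ[F] (Fin (N+1) → F) :=
    { toFun := fun f i => v i * f.eval (a i)
      map_add' := by intro f g; funext i; simp [mul_add]
      map_smul' := by intro c f; funext i; simp; ring } with hev
  have hev_apply : ∀ f i, ev f i = v i * f.eval (a i) := fun f i => rfl
  set Code : Submodule F (Fin (N+1) → F) := Submodule.map ev (degreeLT F k) with hCode
  -- degree bound helper
  have hdegLT : ∀ (j : ℕ) (u : F[X]), u ∈ degreeLT F j → u.natDegree ≤ j - 1 := by
    intro j u hu
    rcases eq_or_ne u 0 with rfl | hu0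
    · simp
    · have := (natDegree_lt_iff_degree_lt hu0).2 (mem_degreeLT.1 hu)
      omega
  -- injectivity on low degrees
  have inj : ∀ f ∈ degreeLT F k, ev f = 0 → f = 0 := by
    intro f hf h0
    refine eq_zero_of_natDegree_lt_card_of_eval_eq_zero f ha (fun i => ?_) ?_
    · have := congrFun h0 i
      rw [hev_apply] at this
      exact (mul_eq_zero.1 this).resolve_left (hv0 i)
    · have := hdegLT k f hf
      simp only [Fintype.card_fin]
      omega
  -- finrank of images
  have rank_map : ∀ W : Submodule F F[X], W ≤ degreeLT F k →
      Module.finrank F (Submodule.map ev W) = Module.finrank F W := by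
    intro W hW
    have hinj : Function.Injective (ev.comp W.subtype) := by
      intro x y hxy
      have : ev ((x : F[X]) - y) = 0 := by
        rw [map_sub, sub_eq_zero]
        exact hxy
      have h2 : (x : F[X]) - y = 0 := inj _ (Submodule.sub_mem _ (hW x.2) (hW y.2)) this
      exact Subtype.ext (sub_eq_zero.1 h2)
    have := LinearMap.finrank_range_of_inj hinj
    rwa [LinearMap.range_comp, Submodule.range_subtype] at this
  have rank_degreeLT : ∀ j : ℕ, Module.finrank F (degreeLT F j) = j := by
    intro j
    rw [(Polynomial.degreeLTEquiv F j).finrank_eq]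
    simp [Module.finrank_fintype_fun_eq_card]
  -- the Frobenius-composed polynomial
  set φ : F →+* F := iterateFrobenius F p l with hφ
  have hφ_apply : ∀ x : F, φ x = x ^ Q := fun x => iterateFrobenius_def p l x
  set Gf : F[X] → F[X] := fun f => (f.map φ).comp (X ^ Q) with hGf
  have hGf_eval : ∀ f (x : F), (Gf f).eval x = (f.eval x) ^ Q := by
    intro f x
    rw [hGf]
    rw [eval_comp, eval_pow, eval_X, Polynomial.eval_map, ← hφ_apply, eval₂_at_apply, hφ_apply]
  have hGf_deg : ∀ f ∈ degreeLT F k, (Gf f).natDegree ≤ (k-1) * Q := by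
    intro f hf
    rw [hGf]
    rw [natDegree_comp, natDegree_X_pow, natDegree_map_eq_of_injective (RingHom.injective φ)]
    exact Nat.mul_le_mul_right _ (hdegLT k f hf)
  -- central sum computation
  have hsum : ∀ f ∈ degreeLT F k, ∀ g ∈ degreeLT F k,
      ∑ i, (ev g) i * ((ev f) i) ^ Q
        = (α - 1) * ∑ i ∈ S, (π i)⁻¹ * (g.eval (a i) * (f.eval (a i)) ^ Q) := by
    intro f hf g hg
    have step1 : ∀ i, (ev g) i * ((ev f) i) ^ Q
        = (if i ∈ S then α else 1) * ((π i)⁻¹ * (g.eval (a i) * (f.eval (a i)) ^ Q)) := by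
      intro i
      rw [hev_apply, hev_apply, mul_pow]
      calc v i * g.eval (a i) * ((v i)^Q * (f.eval (a i))^Q)
          = (v i)^(Q+1) * (g.eval (a i) * (f.eval (a i))^Q) := by ring
        _ = _ := by rw [hv' i]; ring
    have step2 : ∀ i, (if i ∈ S then α else 1) = 1 + (if i ∈ S then α - 1 else 0) := by
      intro i; split <;> ring
    have key : ∑ i, (π i)⁻¹ * (g.eval (a i) * (f.eval (a i)) ^ Q) = 0 := by
      have e1 : ∀ i, g.eval (a i) * (f.eval (a i)) ^ Q = (g * Gf f).eval (a i) := by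
        intro i; rw [eval_mul, hGf_eval]
      calc ∑ i, (π i)⁻¹ * (g.eval (a i) * (f.eval (a i)) ^ Q)
          = ∑ i, (π i)⁻¹ * (g * Gf f).eval (a i) := by
            exact Finset.sum_congr rfl fun i _ => by rw [e1]
        _ = 0 := by
            refine keyIdentity a ha _ ?_
            have h1 : (g * Gf f).natDegree ≤ g.natDegree + (Gf f).natDegree :=
              natDegree_mul_le
            have h2 := hdegLT k g hg
            have h3 := hGf_deg f hf
            have h4 : (k-1) + (k-1)*Q = (k-1)*(Q+1) := by ring
            omega
    calc ∑ i, (ev g) i * ((ev f) i) ^ Q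
        = ∑ i, (1 + (if i ∈ S then α - 1 else 0)) * ((π i)⁻¹ * (g.eval (a i) * (f.eval (a i)) ^ Q)) := by
          refine Finset.sum_congr rfl fun i _ => ?_
          rw [step1 i, ← step2 i]
      _ = (∑ i, (π i)⁻¹ * (g.eval (a i) * (f.eval (a i)) ^ Q))
            + ∑ i, (if i ∈ S then α - 1 else 0) * ((π i)⁻¹ * (g.eval (a i) * (f.eval (a i)) ^ Q)) := by
          rw [← Finset.sum_add_distrib]
          exact Finset.sum_congr rfl fun i _ => by ring
      _ = ∑ i, (if i ∈ S then (α-1) * ((π i)⁻¹ * (g.eval (a i) * (f.eval (a i)) ^ Q)) else 0) := by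
          rw [key, zero_add]
          exact Finset.sum_congr rfl fun i _ => by split <;> simp
      _ = ∑ i ∈ S, (α-1) * ((π i)⁻¹ * (g.eval (a i) * (f.eval (a i)) ^ Q)) := by
          rw [← Finset.sum_filter, Finset.filter_univ_mem]
      _ = (α - 1) * ∑ i ∈ S, (π i)⁻¹ * (g.eval (a i) * (f.eval (a i)) ^ Q) := by
          rw [Finset.mul_sum]
  -- vanishing polynomial on S
  set Z : F[X] := ∏ i ∈ S, (X - C (a i)) with hZ
  have hZmonic : Z.Monic := monic_prod_of_monic _ _ (fun i _ => monic_X_sub_C _)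
  have hZdeg : Z.natDegree = k - h := by
    rw [hZ, natDegree_prod _ _ (fun i _ => X_sub_C_ne_zero _)]
    have : ∀ i ∈ S, (X - C (a i)).natDegree = 1 := fun i _ => natDegree_X_sub_C _
    rw [Finset.sum_congr rfl this]
    simp [hS]
  have hZeval : ∀ i ∈ S, Z.eval (a i) = 0 := by
    intro i hi
    rw [hZ, eval_prod]
    exact Finset.prod_eq_zero hi (by simp)
  set mulZ : F[X] →ₗ[F] F[X] := LinearMap.mulLeft F Z with hmulZ
  have hmulZ_apply : ∀ g : F[X], mulZ g = Z * g := fun g => rfl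
  set W : Submodule F F[X] := Submodule.map mulZ (degreeLT F h) with hW
  have hWk : W ≤ degreeLT F k := by
    rintro f ⟨g₀, hg₀, rfl⟩
    rw [hmulZ_apply]
    rcases eq_or_ne g₀ 0 with rfl | hg0
    · simpa using Submodule.zero_mem _
    · have h1 : (Z * g₀).natDegree = (k - h) + g₀.natDegree := by
        rw [natDegree_mul hZmonic.ne_zero hg0, hZdeg]
      have h2 := hdegLT h g₀ hg₀
      have h3 : 1 ≤ h := by
        by_contra hcon
        have h4 : h = 0 := by omega
        subst h4
        have h5 := mem_degreeLT.1 hg₀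
        rw [Nat.cast_zero] at h5
        exact hg0 (by
          by_contra hg0'
          exact absurd h5 (not_lt.2 (zero_le_degree_iff.2 hg0')))
      have h5 : Z * g₀ ≠ 0 := mul_ne_zero hZmonic.ne_zero hg0
      rw [mem_degreeLT]
      exact (natDegree_lt_iff_degree_lt h5).1 (by omega)
  -- the hull is the image of W
  have mem_dual : ∀ x : Fin (N+1) → F,
      x ∈ galoisDual p l Code ↔ ∀ y ∈ Code, ∑ i, y i * x i ^ Q = 0 := fun x => Iff.rfl
  have hull_eq : galoisHull p l Code = Submodule.map ev W := by
    apply le_antisymm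
    · rintro x hx
      rw [galoisHull, Submodule.mem_inf] at hx
      obtain ⟨hxC, hxD⟩ := hx
      rw [mem_dual] at hxD
      obtain ⟨f, hf, rfl⟩ := hxC
      have vanishS : ∀ i₀ ∈ S, f.eval (a i₀) = 0 := by
        intro i₀ hi₀
        set g : F[X] := ∏ i ∈ S.erase i₀, (X - C (a i)) with hg
        have hgmonic : g.Monic := monic_prod_of_monic _ _ (fun i _ => monic_X_sub_C _)
        have hgdeg : g.natDegree = k - h - 1 := by
          rw [hg, natDegree_prod _ _ (fun i _ => X_sub_C_ne_zero _)]
          have : ∀ i ∈ S.erase i₀, (X - C (a i)).natDegree = 1 := fun i _ => natDegree_X_sub_C _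
          rw [Finset.sum_congr rfl this]
          simp [Finset.card_erase_of_mem hi₀, hS]
        have hgmem : g ∈ degreeLT F k := by
          rw [mem_degreeLT]
          exact (natDegree_lt_iff_degree_lt hgmonic.ne_zero).1 (by omega)
        have h0 := hxD (ev g) ⟨g, hgmem, rfl⟩
        rw [hsum f hf g hgmem] at h0
        have h1 : ∑ i ∈ S, (π i)⁻¹ * (g.eval (a i) * f.eval (a i) ^ Q)
            = (π i₀)⁻¹ * (g.eval (a i₀) * f.eval (a i₀) ^ Q) := by
          refine Finset.sum_eq_single_of_mem i₀ hi₀ (fun i hi hne => ?_)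
          have hgz : g.eval (a i) = 0 := by
            rw [hg, eval_prod]
            exact Finset.prod_eq_zero (Finset.mem_erase.2 ⟨hne, hi⟩) (by simp)
          rw [hgz, zero_mul, mul_zero]
        rw [h1] at h0
        have hα1 : α - 1 ≠ 0 := sub_ne_zero.2 hα
        have hgi₀ : g.eval (a i₀) ≠ 0 := by
          rw [hg, eval_prod, Finset.prod_ne_zero_iff]
          intro i hi
          simp only [eval_sub, eval_X, eval_C]
          exact sub_ne_zero.2 fun hc => (Finset.mem_erase.1 hi).1 (ha hc).symm
        have h2 : f.eval (a i₀) ^ Q = 0 := by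
          have h3 := (mul_eq_zero.1 h0).resolve_left hα1
          have h4 := (mul_eq_zero.1 h3).resolve_left (inv_ne_zero (hπ0 i₀))
          exact (mul_eq_zero.1 h4).resolve_left hgi₀
        exact pow_eq_zero_iff (by omega) |>.1 h2
      obtain ⟨g₀, hfZ⟩ := prod_X_sub_C_dvd_of_eval_eq_zero S a ha.injOn f vanishS
      rcases eq_or_ne g₀ 0 with rfl | hg0
      · rw [show f = 0 by rw [hfZ, mul_zero], map_zero]
        exact Submodule.zero_mem _
      · have hfne : f ≠ 0 := by
          rw [hfZ]; exact mul_ne_zero hZmonic.ne_zero hg0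
        have h1 : f.natDegree = (k - h) + g₀.natDegree := by
          rw [hfZ, natDegree_mul hZmonic.ne_zero hg0, hZdeg]
        have h2 : f.natDegree ≤ k - 1 := hdegLT k f hf
        have hg₀mem : g₀ ∈ degreeLT F h := by
          rw [mem_degreeLT]
          exact (natDegree_lt_iff_degree_lt hg0).1 (by omega)
        exact ⟨f, ⟨g₀, hg₀mem, by rw [hmulZ_apply, ← hfZ]⟩, rfl⟩
    · rintro x ⟨f, hfW, rfl⟩
      have hfk : f ∈ degreeLT F k := hWk hfW
      obtain ⟨g₀, hg₀, hfeq⟩ := hfW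
      have hfS : ∀ i ∈ S, f.eval (a i) = 0 := by
        intro i hi
        rw [← hfeq, hmulZ_apply, eval_mul, hZeval i hi, zero_mul]
      rw [galoisHull, Submodule.mem_inf]
      refine ⟨⟨f, hfk, rfl⟩, ?_⟩
      rw [mem_dual]
      rintro y ⟨g, hg, rfl⟩
      rw [hsum f hfk g hg]
      have : ∑ i ∈ S, (π i)⁻¹ * (g.eval (a i) * f.eval (a i) ^ Q) = 0 := by
        refine Finset.sum_eq_zero (fun i hi => ?_)
        rw [hfS i hi, zero_pow (by omega), mul_zero, mul_zero]
      rw [this, mul_zero]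
  -- rank computations
  have hrankW : Module.finrank F W = h := by
    have hinjZ : Function.Injective (mulZ.comp (degreeLT F h).subtype) := by
      intro x y hxy
      simp only [LinearMap.comp_apply, hmulZ_apply] at hxy
      exact Subtype.ext (mul_left_cancel₀ hZmonic.ne_zero hxy)
    have h1 := LinearMap.finrank_range_of_inj hinjZ
    rw [LinearMap.range_comp, Submodule.range_subtype] at h1
    rw [hW, h1, rank_degreeLT]
  have hrankHull : Module.finrank F (galoisHull p l Code) = h := by
    rw [hull_eq, rank_map W hWk, hrankW]
  have hrankC : Module.finrank F Code = k := by
    rw [hCode, rank_map _ le_rfl, rank_degreeLT]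
  -- minimum distance lower bound
  have hlow : ∀ x ∈ Code, x ≠ 0 → (N+1) - k + 1 ≤ wt x := by
    intro x hx hx0
    obtain ⟨f, hf, rfl⟩ := hx
    have hf0 : f ≠ 0 := fun hc => hx0 (by rw [hc, map_zero])
    have hroots : (Finset.univ.filter (fun i => f.eval (a i) = 0)).card ≤ k - 1 := by
      calc (Finset.univ.filter (fun i => f.eval (a i) = 0)).card
          ≤ f.roots.toFinset.card := by
            refine Finset.card_le_card_of_injOn a (fun i hi => ?_)
              ha.injOn
            rw [Finset.mem_coe, Multiset.mem_toFinset, mem_roots hf0]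
            exact (Finset.mem_filter.1 (Finset.mem_coe.1 hi)).2
        _ ≤ Multiset.card f.roots := f.roots.toFinset_card_le
        _ ≤ f.natDegree := f.card_roots'
        _ ≤ k - 1 := hdegLT k f hf
    have hwt : wt (ev f) = (Finset.univ.filter (fun i => ¬ f.eval (a i) = 0)).card := by
      rw [wt, show {i | ev f i ≠ 0} = ↑(Finset.univ.filter (fun i => ¬ f.eval (a i) = 0)) from ?_]
      · exact Set.ncard_coe_finset _
      · ext i
        simp [hev_apply, hv0 i]
    have hcards := Finset.card_filter_add_card_filter_not
      (s := Finset.univ) (p := fun i : Fin (N+1) => f.eval (a i) = 0)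
    simp only [Finset.card_univ, Fintype.card_fin] at hcards
    omega
  -- a word of minimal weight
  obtain ⟨T, hTsub, hTcard⟩ := Finset.exists_subset_card_eq
    (show k - 1 ≤ (Finset.univ : Finset (Fin (N+1))).card by
      simp only [Finset.card_univ, Fintype.card_fin]; omega)
  set f₀ : F[X] := ∏ i ∈ T, (X - C (a i)) with hf₀
  have hf₀monic : f₀.Monic := monic_prod_of_monic _ _ (fun i _ => monic_X_sub_C _)
  have hf₀deg : f₀.natDegree = k - 1 := by
    rw [hf₀, natDegree_prod _ _ (fun i _ => X_sub_C_ne_zero _)]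
    have : ∀ i ∈ T, (X - C (a i)).natDegree = 1 := fun i _ => natDegree_X_sub_C _
    rw [Finset.sum_congr rfl this]
    simp [hTcard]
  have hf₀mem : f₀ ∈ degreeLT F k := by
    rw [mem_degreeLT]
    exact (natDegree_lt_iff_degree_lt hf₀monic.ne_zero).1 (by omega)
  have hx0 : ev f₀ ≠ 0 := fun hc => hf₀monic.ne_zero (inj f₀ hf₀mem hc)
  have hzero_iff : ∀ i, f₀.eval (a i) = 0 ↔ i ∈ T := by
    intro i
    rw [hf₀, eval_prod]
    constructor
    · intro h0
      obtain ⟨i', hi', h2⟩ := Finset.prod_eq_zero_iff.1 h0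
      rw [eval_sub, eval_X, eval_C, sub_eq_zero] at h2
      rw [ha h2]; exact hi'
    · intro hi
      exact Finset.prod_eq_zero hi (by simp)
  have hwt₀ : wt (ev f₀) = (N+1) - k + 1 := by
    rw [wt, show {i | ev f₀ i ≠ 0} = ↑(Finset.univ.filter (fun i => i ∉ T)) from ?_]
    · rw [Set.ncard_coe_finset]
      have hcards := Finset.card_filter_add_card_filter_not
        (s := Finset.univ) (p := fun i : Fin (N+1) => i ∈ T)
      rw [Finset.filter_univ_mem] at hcards
      simp only [Finset.card_univ, Fintype.card_fin] at hcards
      have : (Finset.filter (fun i => ¬ i ∈ T) Finset.univ).card = N + 1 - (k-1) := by omega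
      rw [show (Finset.filter (fun i => i ∉ T) Finset.univ) = (Finset.filter (fun i => ¬ i ∈ T) Finset.univ) from rfl, this]
      omega
    · ext i
      simp only [Set.mem_setOf_eq, Finset.coe_filter, Finset.mem_univ, true_and, ne_eq,
        hev_apply]
      constructor
      · intro hcc hiT
        exact hcc (by rw [(hzero_iff i).2 hiT, mul_zero])
      · intro hiT hc
        rcases mul_eq_zero.1 hc with h1 | h2
        · exact hv0 i h1
        · exact hiT ((hzero_iff i).1 h2)
  exact ⟨Code, ⟨hrankC, hlow, ⟨ev f₀, ⟨f₀, hf₀mem, rfl⟩, hx0, hwt₀⟩⟩, hrankHull⟩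

open Polynomial in
/-- Theorem 4(2): let `q = p^e` with `p` an odd prime and `2l ∣ e`.
Set `y = (q-1)/(p^l-1)`, let `m ∣ q-1`, `m₁ = m / gcd(m, y)`, and `n = r m` with
`1 ≤ r ≤ (p^l-1)/m₁`.  Then for every `1 ≤ k ≤ ⌊(p^l + n)/(p^l + 1)⌋` and every
admissible `h` there is an `[n + 1, k]_q` MDS code whose `l`-Galois hull has
dimension exactly `h`. -/
theorem exists_mds_code_galoisHull_dim_thm4_2
    (p e l m r n k h : ℕ) [Fact p.Prime] (hodd : Odd p) (he : 0 < e)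
    (h2l : 2 * l ∣ e) (hm : m ∣ p ^ e - 1)
    (hr1 : 1 ≤ r)
    (hr2 : r ≤ (p ^ l - 1) / (m / Nat.gcd m ((p ^ e - 1) / (p ^ l - 1))))
    (hn : n = r * m)
    (hk1 : 1 ≤ k) (hk2 : k ≤ (p ^ l + n) / (p ^ l + 1)) (hh : h ≤ k) :
    ∃ C : Submodule (GaloisField p e) (Fin (n + 1) → GaloisField p e),
      IsMDSCode C k ∧
      Module.finrank (GaloisField p e) (galoisHull p l C) = h := by
  classical
  subst hn
  set F := GaloisField p e with hF
  have hprime : p.Prime := Fact.out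
  have hp3 : 3 ≤ p := by
    have h2 := hprime.two_le
    rcases Nat.lt_or_ge p 3 with h1 | h1
    · have h3 : p = 2 := by omega
      rw [h3] at hodd
      exact absurd hodd (by decide)
    · exact h1
  -- l ≥ 1
  have hl1 : 1 ≤ l := by
    by_contra hcon
    have hl0 : l = 0 := by omega
    subst hl0
    simp at hr2
    omega
  -- basic numbers
  have hle : l ≤ e := le_trans (by omega) (Nat.le_of_dvd he h2l)
  have h2le : 2*l ≤ e := Nat.le_of_dvd he h2l
  set q := p ^ e with hq
  set Q := p ^ l with hQ
  have hQ3 : 3 ≤ Q := le_trans hp3 (Nat.le_self_pow (by omega) p)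
  have hq2 : 2 ≤ q := le_trans (by omega) (le_trans hQ3 (Nat.pow_le_pow_right (by omega) hle))
  have hQq : Q ≤ q := Nat.pow_le_pow_right (by omega) hle
  -- divisibilities
  have hQ1dvd : Q - 1 ∣ q - 1 := by
    obtain ⟨c, hc⟩ := dvd_trans (⟨2, by ring⟩ : l ∣ 2*l) h2l
    rw [hq, hc, pow_mul]
    simpa using Nat.sub_dvd_pow_sub_pow (p^l) 1 c
  have hQ2dvd : Q^2 - 1 ∣ q - 1 := by
    obtain ⟨c, hc⟩ := h2l
    rw [hq, hc, pow_mul]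
    have : p ^ (2*l) = Q^2 := by rw [hQ, ← pow_mul, mul_comm]
    rw [← this]
    simpa using Nat.sub_dvd_pow_sub_pow (p^(2*l)) 1 c
  set y := (q - 1) / (Q - 1) with hy
  have hyQ : y * (Q - 1) = q - 1 := Nat.div_mul_cancel hQ1dvd
  have hy1 : 1 ≤ y := by
    rcases Nat.eq_zero_or_pos y with h1 | h1
    · rw [h1, zero_mul] at hyQ; omega
    · exact h1
  set y₂ := (q - 1) / (Q^2 - 1) with hy₂
  have hy₂Q : y₂ * (Q^2 - 1) = q - 1 := Nat.div_mul_cancel hQ2dvd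
  have hQfac : (Q+1) * (Q-1) = Q^2 - 1 := by
    have h1 : 1 ≤ Q := by omega
    have h2 : 1 ≤ Q^2 := Nat.one_le_pow _ _ (by omega)
    zify [h1, h2]
    ring
  have hyy₂ : y = (Q+1) * y₂ := by
    have h1 : ((Q+1) * y₂) * (Q-1) = q - 1 := by
      rw [mul_assoc, mul_comm y₂ (Q-1), ← mul_assoc, hQfac, mul_comm, hy₂Q]
    have h2 := hyQ
    have h3 : (Q - 1) > 0 := by omega
    exact Nat.eq_of_mul_eq_mul_right h3 (h2.trans h1.symm)
  -- m, m₁, gcd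
  have hm1 : 1 ≤ m := Nat.pos_of_dvd_of_pos hm (by omega)
  set g' := Nat.gcd m y with hg'
  have hg'1 : 1 ≤ g' := Nat.gcd_pos_of_pos_left _ hm1
  set m₁ := m / g' with hm₁
  have hm₁g : m₁ * g' = m := Nat.div_mul_cancel (Nat.gcd_dvd_left m y)
  have hm₁1 : 1 ≤ m₁ := by
    rcases Nat.eq_zero_or_pos m₁ with h1 | h1
    · rw [h1, zero_mul] at hm₁g; omega
    · exact h1
  have hm₁Q : m₁ ∣ Q - 1 := by
    have hcop : Nat.Coprime m₁ (y / g') :=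
      Nat.coprime_div_gcd_div_gcd (by omega)
    have hyg : (y / g') * g' = y := Nat.div_mul_cancel (Nat.gcd_dvd_right m y)
    have hdvd : m ∣ y * (Q - 1) := by rw [hyQ]; exact hm
    obtain ⟨c, hc⟩ := hdvd
    have h1 : (y / g') * (Q-1) * g' = m₁ * c * g' := by
      calc (y / g') * (Q-1) * g' = ((y/g') * g') * (Q-1) := by ring
        _ = y * (Q-1) := by rw [hyg]
        _ = m * c := hc
        _ = m₁ * c * g' := by rw [← hm₁g]; ring
    have h2 : (y / g') * (Q-1) = m₁ * c := Nat.eq_of_mul_eq_mul_right (by omega) h1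
    have h3 : m₁ ∣ (y / g') * (Q-1) := Dvd.intro c h2.symm
    exact hcop.dvd_of_dvd_mul_left h3
  have hrQ : r ≤ (Q-1)/m₁ := hr2
  have hn_le : r * m ≤ q - 1 := by
    have h1 : r * m₁ ≤ Q - 1 := by
      have h2 : ((Q-1)/m₁) * m₁ = Q - 1 := Nat.div_mul_cancel hm₁Q
      calc r * m₁ ≤ ((Q-1)/m₁) * m₁ := Nat.mul_le_mul_right _ hrQ
        _ = Q - 1 := h2
    calc r * m = r * m₁ * g' := by rw [mul_assoc, hm₁g]
      _ ≤ (Q-1) * g' := Nat.mul_le_mul_right _ h1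
      _ ≤ (Q-1) * y := Nat.mul_le_mul_left _ (Nat.le_of_dvd (by omega) (Nat.gcd_dvd_right m y))
      _ = q - 1 := by rw [mul_comm]; exact hyQ
  -- the k bound
  have hkn : (k-1)*(Q+1)+1 ≤ r*m := by
    have h1 : k * (Q+1) ≤ Q + r*m := (Nat.le_div_iff_mul_le (by omega)).1 hk2
    have h2 : ((k-1)+1) * (Q+1) = (k-1)*(Q+1) + (Q+1) := by ring
    have h3 : (k-1)+1 = k := by omega
    rw [h3] at h2
    omega
  -- group theory in the Galois field
  haveI instFinF : Finite F := inferInstanceAs (Finite (GaloisField p e))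
  haveI instFtF : Fintype F := Fintype.ofFinite F
  have hcard : Fintype.card F = q := by
    rw [← Nat.card_eq_fintype_card]
    exact GaloisField.card p e (by omega)
  have hcardU : Fintype.card Fˣ = q - 1 := by rw [Fintype.card_units, hcard]
  obtain ⟨ζ, hζ⟩ := IsCyclic.exists_generator (α := Fˣ)
  have hord : orderOf ζ = q - 1 := by
    rw [orderOf_eq_card_of_forall_mem_zpowers hζ, Nat.card_eq_fintype_card, hcardU]
  have hζq1 : ζ ^ (q-1) = 1 := by rw [← hord]; exact pow_orderOf_eq_one ζ
  set μ : Fˣ := ζ ^ ((q-1)/m) with hμ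
  have hμord : orderOf μ = m := by
    rw [hμ, orderOf_pow, hord, Nat.gcd_eq_right (Nat.div_dvd_of_dvd hm),
      Nat.div_div_self hm (by omega)]
  have hμm : μ ^ m = 1 := by rw [← hμord]; exact pow_orderOf_eq_one μ
  set ρ : Fˣ := ζ ^ (y / g') with hρ
  set θ : Fˣ := ρ ^ m with hθ
  have hθζ : θ = ζ ^ (y * m₁) := by
    rw [hθ, hρ, ← pow_mul]
    congr 1
    have h1 : (y/g') * g' = y := Nat.div_mul_cancel (Nat.gcd_dvd_right m y)
    calc (y/g') * m = (y/g') * (m₁ * g') := by rw [hm₁g]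
      _ = ((y/g') * g') * m₁ := by ring
      _ = y * m₁ := by rw [h1]
  have hym₁dvd : y * m₁ ∣ q - 1 := by rw [← hyQ]; exact mul_dvd_mul_left y hm₁Q
  have hθord : orderOf θ = (Q-1)/m₁ := by
    rw [hθζ, orderOf_pow, hord, Nat.gcd_eq_right hym₁dvd, ← hyQ,
      Nat.mul_div_mul_left _ _ (by omega : 0 < y)]
  have hθQ1 : θ ^ (Q-1) = 1 := by
    rw [hθζ, ← pow_mul]
    have h1 : y * m₁ * (Q-1) = (q-1) * m₁ := by
      calc y*m₁*(Q-1) = (y*(Q-1))*m₁ := by ring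
        _ = (q-1)*m₁ := by rw [hyQ]
    rw [h1, pow_mul, hζq1, one_pow]
  -- (p^l+1)-th roots of F_{p^l}-elements
  have hpow_lemma : ∀ x : Fˣ, x ^ (Q-1) = 1 → ∃ w : Fˣ, w ^ (Q+1) = x := by
    intro x hx
    obtain ⟨s, hs⟩ : ∃ s : ℕ, ζ ^ s = x := by
      have h1 := hζ x
      rwa [← mem_powers_iff_mem_zpowers, Submonoid.mem_powers_iff] at h1
    have h2 : orderOf ζ ∣ s * (Q-1) := orderOf_dvd_of_pow_eq_one (by
      rw [pow_mul, hs, hx])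
    rw [hord] at h2
    have h3 : y ∣ s := by
      have h4 : y * (Q-1) ∣ s * (Q-1) := by rw [hyQ]; exact h2
      exact Nat.dvd_of_mul_dvd_mul_right (by omega) h4
    obtain ⟨s', rfl⟩ := h3
    refine ⟨ζ ^ (y₂ * s'), ?_⟩
    rw [← pow_mul, ← hs]
    congr 1
    calc y₂ * s' * (Q+1) = ((Q+1) * y₂) * s' := by ring
      _ = y * s' := by rw [← hyy₂]
  -- α
  set αu : Fˣ := ζ ^ y with hαu
  have hαuQ1 : αu ^ (Q-1) = 1 := by rw [hαu, ← pow_mul, hyQ, hζq1]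
  have hα1 : ((αu : Fˣ) : F) ≠ 1 := by
    intro hc
    have h1 : αu = 1 := Units.ext (by rwa [Units.val_one])
    have h2 : orderOf ζ ∣ y := orderOf_dvd_of_pow_eq_one (hαu ▸ h1)
    rw [hord] at h2
    have h3 := Nat.le_of_dvd (by omega) h2
    have h4 : y * 2 ≤ y * (Q-1) := Nat.mul_le_mul_left _ (by omega)
    omega
  -- the evaluation points
  set pt : Fin r × Fin m → Fˣ := fun jt => ρ ^ (jt.1 : ℕ) * μ ^ (jt.2 : ℕ) with hpt
  have hptm : ∀ jt : Fin r × Fin m, (pt jt) ^ m = θ ^ (jt.1 : ℕ) := by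
    intro jt
    have h1 : pt jt ^ m = (ρ ^ (jt.1:ℕ)) ^ m * (μ ^ (jt.2:ℕ)) ^ m := by rw [hpt, mul_pow]
    rw [h1]
    have h2 : (μ ^ (jt.2:ℕ)) ^ m = 1 := by
      rw [← pow_mul, mul_comm, pow_mul, hμm, one_pow]
    rw [h2, mul_one, ← pow_mul, mul_comm, pow_mul, ← hθ]
  have hθinj : ∀ j1 j2 : Fin r, θ ^ (j1:ℕ) = θ ^ (j2:ℕ) → j1 = j2 := by
    intro j1 j2 hj
    have h1 : (j1:ℕ) < orderOf θ := by rw [hθord]; omega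
    have h2 : (j2:ℕ) < orderOf θ := by rw [hθord]; omega
    exact Fin.ext (pow_injOn_Iio_orderOf h1 h2 hj)
  have hptinj : Function.Injective pt := by
    intro jt1 jt2 hpteq
    have h1 : θ ^ ((jt1.1:ℕ)) = θ ^ ((jt2.1:ℕ)) := by
      rw [← hptm jt1, ← hptm jt2, hpteq]
    have hj : jt1.1 = jt2.1 := hθinj _ _ h1
    have h2 : μ ^ (jt1.2:ℕ) = μ ^ (jt2.2:ℕ) := by
      rw [hpt] at hpteq
      simp only at hpteq
      rw [hj] at hpteq
      exact mul_left_cancel hpteq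
    have ht : jt1.2 = jt2.2 := by
      have h3 : (jt1.2:ℕ) < orderOf μ := by rw [hμord]; exact jt1.2.isLt
      have h4 : (jt2.2:ℕ) < orderOf μ := by rw [hμord]; exact jt2.2.isLt
      exact Fin.ext (pow_injOn_Iio_orderOf h3 h4 h2)
    exact Prod.ext hj ht
  set aa : Fin (r*m+1) → F :=
    Fin.cons 0 (fun s => ((pt (finProdFinEquiv.symm s) : Fˣ) : F)) with haa
  have haa0 : aa 0 = 0 := rfl
  have haas : ∀ s : Fin (r*m), aa s.succ = ((pt (finProdFinEquiv.symm s) : Fˣ) : F) :=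
    fun s => by rw [haa, Fin.cons_succ]
  have hainj : Function.Injective aa := by
    intro i1 i2 hi
    rcases Fin.eq_zero_or_eq_succ i1 with rfl | ⟨s1, rfl⟩ <;>
      rcases Fin.eq_zero_or_eq_succ i2 with rfl | ⟨s2, rfl⟩
    · rfl
    · exfalso
      rw [haa0, haas s2] at hi
      exact Units.ne_zero _ hi.symm
    · exfalso
      rw [haa0, haas s1] at hi
      exact Units.ne_zero _ hi
    · rw [haas s1, haas s2] at hi
      have h1 : pt (finProdFinEquiv.symm s1) = pt (finProdFinEquiv.symm s2) := Units.ext hi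
      have h2 := finProdFinEquiv.symm.injective (hptinj h1)
      rw [h2]
  -- the master polynomial identity
  have hm0 : 0 < m := hm1
  set R : F[X] := ∏ j : Fin r, (X^m - C ((θ ^ (j:ℕ) : Fˣ) : F)) with hR
  have hL2 : ∏ i, (X - C (aa i)) = X * R := by
    rw [Fin.prod_univ_succ, haa0, C_0, sub_zero]
    congr 1
    calc ∏ s : Fin (r*m), (X - C (aa s.succ))
        = ∏ s : Fin (r*m), (X - C ((pt (finProdFinEquiv.symm s) : Fˣ) : F)) := by
          exact Finset.prod_congr rfl (fun s _ => by rw [haas s])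
      _ = ∏ jt : Fin r × Fin m, (X - C ((pt jt : Fˣ) : F)) :=
          Equiv.prod_comp finProdFinEquiv.symm (fun jt => X - C ((pt jt : Fˣ) : F))
      _ = ∏ j : Fin r, ∏ t : Fin m, (X - C ((ρ^(j:ℕ) * μ^(t:ℕ) : Fˣ) : F)) := by
          rw [Fintype.prod_prod_type]
      _ = R := by
          rw [hR]
          refine Finset.prod_congr rfl (fun j _ => ?_)
          rw [prod_lin_eq_X_pow_sub m hm0 (ρ^(j:ℕ)) μ hμord]
          congr 2
          rw [← pow_mul, mul_comm (j:ℕ) m, pow_mul, ← hθ]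
  -- the pi products
  set π : Fin (r*m+1) → F := fun i => ∏ i' ∈ Finset.univ.erase i, (aa i - aa i') with hπ
  have hπP : ∀ i, (X - C (aa i)) * (∏ i' ∈ Finset.univ.erase i, (X - C (aa i'))) = X * R := by
    intro i
    rw [← hL2]
    exact Finset.mul_prod_erase Finset.univ (fun i' => X - C (aa i')) (Finset.mem_univ i)
  have hπeval : ∀ i, π i = Polynomial.eval (aa i) (∏ i' ∈ Finset.univ.erase i, (X - C (aa i'))) := by
    intro i
    rw [hπ, eval_prod]
    simp
  have hπ0val : π 0 = ∏ j : Fin r, ((0:F) - ((θ:Fˣ):F) ^ (j:ℕ)) := by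
    have h1 := hπP 0
    rw [haa0, C_0, sub_zero] at h1
    have h2 : (∏ i' ∈ Finset.univ.erase 0, (X - C (aa i'))) = R :=
      mul_left_cancel₀ X_ne_zero h1
    rw [hπeval 0, h2, hR, haa0, eval_prod]
    refine Finset.prod_congr rfl (fun j _ => ?_)
    rw [eval_sub, eval_pow, eval_X, eval_C, zero_pow (by omega : m ≠ 0),
      Units.val_pow_eq_pow_val]
  have hπnode : ∀ s : Fin (r*m), π s.succ
      = (m:F) * ((θ:Fˣ):F) ^ (((finProdFinEquiv.symm s).1:ℕ))
        * ∏ j ∈ Finset.univ.erase (finProdFinEquiv.symm s).1,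
            (((θ:Fˣ):F) ^ (((finProdFinEquiv.symm s).1:ℕ)) - ((θ:Fˣ):F) ^ (j:ℕ)) := by
    intro s
    set jt := finProdFinEquiv.symm s with hjt
    have hx : aa s.succ = ((pt jt : Fˣ) : F) := haas s
    have hxm : (aa s.succ)^m = ((θ:Fˣ):F) ^ ((jt.1:ℕ)) := by
      rw [hx, ← Units.val_pow_eq_pow_val, hptm jt, Units.val_pow_eq_pow_val]
    have hfac : X * R = (X - C (aa s.succ)) *
        (X * (∏ j ∈ Finset.univ.erase jt.1, (X^m - C (((θ ^ (j:ℕ) : Fˣ)) : F)))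
           * (∏ t ∈ Finset.univ.erase jt.2, (X - C ((ρ^(jt.1:ℕ) * μ^(t:ℕ) : Fˣ) : F)))) := by
      have h1 : R = (X^m - C ((θ ^ (jt.1:ℕ) : Fˣ) : F)) *
          ∏ j ∈ Finset.univ.erase jt.1, (X^m - C ((θ ^ (j:ℕ) : Fˣ) : F)) := by
        rw [hR]
        exact (Finset.mul_prod_erase Finset.univ _ (Finset.mem_univ jt.1)).symm
      have h3 : (X^m - C ((θ ^ (jt.1:ℕ) : Fˣ) : F) : F[X])
          = X^m - C (((ρ^(jt.1:ℕ))^m : Fˣ) : F) := by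
        congr 3
        rw [hθ]
        exact pow_right_comm ρ m (jt.1:ℕ)
      have h4 : aa s.succ = ((ρ^(jt.1:ℕ) * μ^(jt.2:ℕ) : Fˣ) : F) := by rw [hx, hpt]
      have h2 : (X^m - C ((θ ^ (jt.1:ℕ) : Fˣ) : F) : F[X])
          = (X - C (aa s.succ)) *
            ∏ t ∈ Finset.univ.erase jt.2, (X - C ((ρ^(jt.1:ℕ) * μ^(t:ℕ) : Fˣ) : F)) := by
        rw [h3, ← prod_lin_eq_X_pow_sub m hm0 (ρ^(jt.1:ℕ)) μ hμord, h4]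
        exact (Finset.mul_prod_erase Finset.univ _ (Finset.mem_univ jt.2)).symm
      rw [h1, h2]
      ring
    have h6 : (∏ i' ∈ Finset.univ.erase (Fin.succ s), (X - C (aa i')))
        = X * (∏ j ∈ Finset.univ.erase jt.1, (X^m - C (((θ ^ (j:ℕ) : Fˣ)) : F)))
           * (∏ t ∈ Finset.univ.erase jt.2, (X - C ((ρ^(jt.1:ℕ) * μ^(t:ℕ) : Fˣ) : F))) :=
      mul_left_cancel₀ (X_sub_C_ne_zero (aa s.succ)) ((hπP s.succ).trans hfac)
    have h4 : aa s.succ = ((ρ^(jt.1:ℕ) * μ^(jt.2:ℕ) : Fˣ) : F) := by rw [hx, hpt]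
    have h7 : Polynomial.eval (aa s.succ)
        (∏ t ∈ Finset.univ.erase jt.2, (X - C ((ρ^(jt.1:ℕ) * μ^(t:ℕ) : Fˣ) : F)))
        = (m : F) * (aa s.succ)^(m-1) := by
      rw [eval_prod]
      calc ∏ t ∈ Finset.univ.erase jt.2,
            Polynomial.eval (aa s.succ) (X - C ((ρ^(jt.1:ℕ) * μ^(t:ℕ) : Fˣ) : F))
          = ∏ t ∈ Finset.univ.erase jt.2,
              (((ρ^(jt.1:ℕ) * μ^(jt.2:ℕ) : Fˣ) : F) - ((ρ^(jt.1:ℕ) * μ^(t:ℕ) : Fˣ) : F)) := by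
            refine Finset.prod_congr rfl (fun t _ => ?_)
            rw [eval_sub, eval_X, eval_C, h4]
        _ = (m : F) * ((ρ^(jt.1:ℕ) * μ^(jt.2:ℕ) : Fˣ) : F)^(m-1) :=
            prod_erase_eval m hm0 _ μ hμord jt.2
        _ = (m : F) * (aa s.succ)^(m-1) := by rw [← h4]
    rw [hπeval, h6, eval_mul, eval_mul, eval_X, h7, eval_prod]
    have h9 : ∀ j ∈ Finset.univ.erase jt.1,
        Polynomial.eval (aa s.succ) (X^m - C ((θ^(j:ℕ) : Fˣ) : F))
        = ((θ:Fˣ):F)^((jt.1:ℕ)) - ((θ:Fˣ):F)^(j:ℕ) := by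
      intro j _
      simp only [eval_sub, eval_pow, eval_X, eval_C, hxm, Units.val_pow_eq_pow_val]
    rw [Finset.prod_congr rfl h9]
    have h10 : aa s.succ * (aa s.succ)^(m-1) = ((θ:Fˣ):F)^((jt.1:ℕ)) := by
      rw [← pow_succ', Nat.sub_add_cancel hm0, hxm]
    calc aa s.succ
          * (∏ j ∈ Finset.univ.erase jt.1, (((θ:Fˣ):F)^((jt.1:ℕ)) - ((θ:Fˣ):F)^(j:ℕ)))
          * ((m:F) * (aa s.succ)^(m-1))
        = (m:F) * (aa s.succ * (aa s.succ)^(m-1))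
          * (∏ j ∈ Finset.univ.erase jt.1, (((θ:Fˣ):F)^((jt.1:ℕ)) - ((θ:Fˣ):F)^(j:ℕ))) := by
          ring
      _ = _ := by rw [h10]
  -- Frobenius-fixed elements
  have aux_iter : ∀ (ll : ℕ) (x : F), x^p = x → x^(p^ll) = x := by
    intro ll x hx
    induction ll with
    | zero => simp
    | succ nn ih => rw [pow_succ, pow_mul, ih, hx]
  have hfixm : ((m:ℕ) : F) ^ Q = ((m:ℕ) : F) := by
    rw [hQ]
    refine aux_iter l _ ?_
    rw [← frobenius_def]
    exact map_natCast (frobenius F p) m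
  have hfixθ : ((θ:Fˣ):F) ^ Q = ((θ:Fˣ):F) := by
    have h1 : ((θ:Fˣ):F) ^ (Q-1) = 1 := by
      rw [← Units.val_pow_eq_pow_val, hθQ1, Units.val_one]
    calc ((θ:Fˣ):F)^Q = ((θ:Fˣ):F)^(Q-1) * ((θ:Fˣ):F) := by
          rw [← pow_succ, Nat.sub_add_cancel (by omega)]
      _ = ((θ:Fˣ):F) := by rw [h1, one_mul]
  have hfix_pow : ∀ (x : F) (j : ℕ), x^Q = x → (x^j)^Q = x^j := by
    intro x j hx
    rw [← pow_mul, mul_comm, pow_mul, hx]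
  have hfix_sub : ∀ x z : F, x^Q = x → z^Q = z → (x - z)^Q = x - z := by
    intro x z hx hz
    rw [hQ, sub_pow_char_pow, ← hQ, hx, hz]
  have hfix_mul : ∀ x z : F, x^Q = x → z^Q = z → (x * z)^Q = x * z := by
    intro x z hx hz
    rw [mul_pow, hx, hz]
  have hfix_prod : ∀ {ι : Type} (s : Finset ι) (f : ι → F),
      (∀ i ∈ s, (f i)^Q = f i) → (∏ i ∈ s, f i)^Q = ∏ i ∈ s, f i := by
    intro ι s f hf
    rw [← Finset.prod_pow]
    exact Finset.prod_congr rfl hf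
  have hfix0 : (0:F)^Q = 0 := zero_pow (by omega)
  -- π is fixed by the Galois power map
  have hπfix : ∀ i, (π i)^Q = π i := by
    intro i
    rcases Fin.eq_zero_or_eq_succ i with rfl | ⟨s, rfl⟩
    · rw [hπ0val]
      exact hfix_prod _ _ (fun j _ =>
        hfix_sub _ _ hfix0 (hfix_pow _ _ hfixθ))
    · rw [hπnode s]
      exact hfix_mul _ _ (hfix_mul _ _ hfixm (hfix_pow _ _ hfixθ))
        (hfix_prod _ _ (fun j _ =>
          hfix_sub _ _ (hfix_pow _ _ hfixθ) (hfix_pow _ _ hfixθ)))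
  have hπne : ∀ i, π i ≠ 0 := by
    intro i
    rw [hπ, Finset.prod_ne_zero_iff]
    intro j hj
    exact sub_ne_zero.2 fun hc => (Finset.mem_erase.1 hj).1 (hainj hc).symm
  have hπQ1 : ∀ i, (π i)^(Q-1) = 1 := by
    intro i
    have h1 : (π i)^(Q-1) * π i = 1 * π i := by
      rw [one_mul, ← pow_succ, Nat.sub_add_cancel (by omega)]
      exact hπfix i
    exact mul_right_cancel₀ (hπne i) h1
  -- the subset S
  obtain ⟨S, hSsub, hScard⟩ := Finset.exists_subset_card_eq
    (show k - h ≤ (Finset.univ : Finset (Fin (r*m+1))).card by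
      simp only [Finset.card_univ, Fintype.card_fin]
      have h1 : (k-1) * 1 ≤ (k-1)*(Q+1) := Nat.mul_le_mul_left _ (by omega)
      omega)
  -- the multipliers v
  have hv_ex : ∀ i : Fin (r*m+1), ∃ w : Fˣ,
      ((w : Fˣ) : F)^(Q+1) * π i = (if i ∈ S then ((αu:Fˣ):F) else 1) := by
    intro i
    set πu : Fˣ := Units.mk0 (π i) (hπne i) with hπu
    have hπuQ1 : πu ^ (Q-1) = 1 := by
      apply Units.ext
      rw [Units.val_pow_eq_pow_val, hπu, Units.val_mk0, hπQ1 i, Units.val_one]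
    have hxQ1 : ((if i ∈ S then αu else 1) * πu⁻¹) ^ (Q-1) = 1 := by
      rw [mul_pow, inv_pow, hπuQ1, inv_one, mul_one]
      split
      · exact hαuQ1
      · exact one_pow _
    obtain ⟨w, hw⟩ := hpow_lemma _ hxQ1
    refine ⟨w, ?_⟩
    have h1 : ((w ^ (Q+1) : Fˣ) : F)
        = (((if i ∈ S then αu else 1) : Fˣ) : F) * ((πu⁻¹ : Fˣ) : F) := by
      rw [hw, Units.val_mul]
    have h2 : ((πu⁻¹ : Fˣ) : F) = (π i)⁻¹ := by
      rw [Units.val_inv_eq_inv_val, hπu, Units.val_mk0]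
    rw [← Units.val_pow_eq_pow_val, h1, h2, mul_assoc, inv_mul_cancel₀ (hπne i), mul_one,
      apply_ite (fun u : Fˣ => (u : F)), Units.val_one]
  choose w hw using hv_ex
  -- conclude via the abstract construction
  have main := constructionM p l (r*m) k h aa hainj (fun i => ((w i : Fˣ) : F))
    (fun i => Units.ne_zero _) S hScard ((αu:Fˣ):F) hα1 ?_ hk1 hh ?_
  · exact main
  · intro i
    exact hw i
  · exact hkn
end

section
/- Let q = p^e be a prime power with l | e. Let α be a primitive element of F_q, ξ_1 = α^{x_1}, ξ_2 = α^{x_2}, and assume (q−1) | lcm(x_1, x_2) and gcd(x_2, q−1) | x_1(p^l − 1). Let n = r_1 r_2 where 1 ≤ r_1 ≤ ord(ξ_1) and r_2 = ord(ξ_2), and let {a_1,…,a_n} = ∪_{i=1}^{r_1} {ξ_1^i ξ_2^j : j = 1,…,r_2}. Then Π_{j=1}^{n} (0 − a_j)^{−1} = (−1)^n ξ_1^{−r_1(r_1+1)r_2/2} ξ_2^{−r_2(r_2+1)r_1/2}, and this element lies in F_{p^l}^*. -/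
open Finset
open scoped Classical

lemma gauss_aux (m : ℕ) : (∑ i ∈ Icc 1 m, i) * 2 = m * (m + 1) := by
  induction m with
  | zero => simp
  | succ k ih =>
    rw [Finset.sum_Icc_succ_top (by omega), add_mul, ih]
    ring

lemma eq_of_modEq_Icc {a b n : ℕ} (h : a ≡ b [MOD n]) (h1 : 1 ≤ a) (h2 : a ≤ n)
    (h3 : 1 ≤ b) (h4 : b ≤ n) : a = b := by
  rcases le_total a b with hle | hle
  · have hd := (Nat.modEq_iff_dvd' hle).mp h
    have := Nat.eq_zero_of_dvd_of_lt hd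
    omega
  · have hd := (Nat.modEq_iff_dvd' hle).mp h.symm
    have := Nat.eq_zero_of_dvd_of_lt hd
    omega

lemma lcm_gcd_eq_of_dvd_lcm {x y N : ℕ} (hx : x ≠ 0) (hy : y ≠ 0) (hN : N ≠ 0)
    (h : N ∣ Nat.lcm x y) : Nat.lcm (Nat.gcd x N) (Nat.gcd y N) = N := by
  have hg1 : Nat.gcd x N ≠ 0 := Nat.gcd_ne_zero_right hN
  have hg2 : Nat.gcd y N ≠ 0 := Nat.gcd_ne_zero_right hN
  have hl : Nat.lcm (Nat.gcd x N) (Nat.gcd y N) ≠ 0 := Nat.lcm_ne_zero hg1 hg2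
  apply Nat.dvd_antisymm
  · exact Nat.lcm_dvd (Nat.gcd_dvd_right _ _) (Nat.gcd_dvd_right _ _)
  · rw [← Nat.factorization_le_iff_dvd hN hl, Nat.factorization_lcm hg1 hg2,
      Nat.factorization_gcd hx hN, Nat.factorization_gcd hy hN]
    have h2 := (Nat.factorization_le_iff_dvd hN (Nat.lcm_ne_zero hx hy)).mpr h
    rw [Nat.factorization_lcm hx hy] at h2
    rw [Finsupp.le_def] at h2 ⊢
    intro q
    have := h2 q
    simp only [Finsupp.sup_apply, Finsupp.inf_apply] at this ⊢
    omega

/-- let `q = p^e` with `l ∣ e`, `α` a primitive element of `F_q`,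
`ξ₁ = α^{x₁}`, `ξ₂ = α^{x₂}`, and assume `(q-1) ∣ lcm(x₁,x₂)` and
`gcd(x₂, q-1) ∣ x₁(p^l - 1)`.  With `r₂ = ord(ξ₂)`, `1 ≤ r₁ ≤ ord(ξ₁)`, `n = r₁ r₂` and
`𝒜 = ⋃_{s=1}^{r₁} {ξ₁^s ξ₂^t : 1 ≤ t ≤ r₂}` (a set of `n` distinct elements), we have
`∏_{a ∈ 𝒜} (0 - a)⁻¹ = (-1)^n ξ₁^{-r₁(r₁+1)r₂/2} ξ₂^{-r₂(r₂+1)r₁/2}`, and this element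
lies in `F_{p^l}^*` (i.e. it is nonzero and fixed by the `p^l`-power Frobenius). -/
theorem prod_inv_neg_eq_of_union_cosets (p e l x1 x2 r1 : ℕ) [Fact p.Prime] (he : 0 < e)
    (hle : l ∣ e) (α : GaloisField p e) (hα : orderOf α = p ^ e - 1)
    (hx1 : 0 < x1) (hx2 : 0 < x2)
    (hlcm : (p ^ e - 1) ∣ Nat.lcm x1 x2)
    (hgcd : Nat.gcd x2 (p ^ e - 1) ∣ x1 * (p ^ l - 1))
    (hr1 : 1 ≤ r1) (hr1' : r1 ≤ orderOf (α ^ x1)) :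
    let ξ1 : GaloisField p e := α ^ x1
    let ξ2 : GaloisField p e := α ^ x2
    let r2 : ℕ := orderOf ξ2
    let n : ℕ := r1 * r2
    let A : Finset (GaloisField p e) :=
      (Finset.Icc 1 r1 ×ˢ Finset.Icc 1 r2).image fun st => ξ1 ^ st.1 * ξ2 ^ st.2
    (∏ b ∈ A, (0 - b)⁻¹) =
        (-1 : GaloisField p e) ^ n * (ξ1 ^ (r1 * (r1 + 1) * r2 / 2))⁻¹ *
          (ξ2 ^ (r2 * (r2 + 1) * r1 / 2))⁻¹ ∧
      (∏ b ∈ A, (0 - b)⁻¹) ≠ 0 ∧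
      (∏ b ∈ A, (0 - b)⁻¹) ^ p ^ l = ∏ b ∈ A, (0 - b)⁻¹ := by
  intro ξ1 ξ2 r2 n A
  have hp : p.Prime := Fact.out
  set N := p ^ e - 1 with hNdef
  have hq2 : 2 ≤ p ^ e := Nat.one_lt_pow he.ne' hp.one_lt
  have hN0 : 0 < N := by omega
  have hl0 : 0 < l := by
    rcases Nat.eq_zero_or_pos l with h | h
    · subst h; rw [zero_dvd_iff] at hle; omega
    · exact h
  have hαN : α ^ N = 1 := by rw [← hα]; exact pow_orderOf_eq_one α
  have hα0 : α ≠ 0 := by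
    intro h; rw [h, zero_pow hN0.ne'] at hαN; exact zero_ne_one hαN
  have hξ10 : ξ1 ≠ 0 := pow_ne_zero _ hα0
  have hξ20 : ξ2 ≠ 0 := pow_ne_zero _ hα0
  -- units
  set αu : (GaloisField p e)ˣ := Units.mk0 α hα0 with hαu
  have hαuord : orderOf αu = N := by
    rw [← orderOf_units]; simpa [hαu] using hα
  have hαuN : αu ^ N = 1 := by
    apply Units.ext; push_cast [hαu]; simpa using hαN
  have hξ1c : ((αu ^ x1 : (GaloisField p e)ˣ) : GaloisField p e) = ξ1 := by push_cast [hαu]; rfl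
  have hξ2c : ((αu ^ x2 : (GaloisField p e)ˣ) : GaloisField p e) = ξ2 := by push_cast [hαu]; rfl
  have hr2u : orderOf (αu ^ x2) = r2 := by rw [← orderOf_units, hξ2c]
  have hr1u : orderOf (αu ^ x1) = orderOf ξ1 := by rw [← orderOf_units, hξ1c]
  have hr2N : r2 ∣ N := by rw [← hr2u, ← hαuord]; exact orderOf_pow_dvd x2
  have hNr2 : N ∣ x2 * r2 := by
    rw [← hαuord]
    apply orderOf_dvd_of_pow_eq_one
    rw [pow_mul, ← hr2u]
    exact pow_orderOf_eq_one _
  have hr2eq : r2 = N / Nat.gcd N x2 := by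
    rw [← hr2u, orderOf_pow' _ hx2.ne', hαuord]
  have hd2r2 : Nat.gcd N x2 * r2 = N := by
    rw [hr2eq]; exact Nat.mul_div_cancel' (Nat.gcd_dvd_left N x2)
  have hr2pos : 0 < r2 := by
    rcases Nat.eq_zero_or_pos r2 with h | h
    · rw [h, Nat.mul_zero] at hd2r2; omega
    · exact h
  have hkey : Nat.lcm (Nat.gcd x1 N) (Nat.gcd x2 N) = N :=
    lcm_gcd_eq_of_dvd_lcm hx1.ne' hx2.ne' hN0.ne' hlcm
  -- injectivity
  have hinj : ∀ a ∈ Icc 1 r1 ×ˢ Icc 1 r2, ∀ b ∈ Icc 1 r1 ×ˢ Icc 1 r2,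
      (fun st : ℕ × ℕ => ξ1 ^ st.1 * ξ2 ^ st.2) a
        = (fun st : ℕ × ℕ => ξ1 ^ st.1 * ξ2 ^ st.2) b → a = b := by
    rintro ⟨s, t⟩ hst ⟨s', t'⟩ hst' heq
    simp only [Finset.mem_product, Finset.mem_Icc] at hst hst'
    simp only at heq
    have hkeyst : ∀ a b : ℕ, ξ1 ^ a * ξ2 ^ b = α ^ (x1 * a + x2 * b) := by
      intro a b
      show (α ^ x1) ^ a * (α ^ x2) ^ b = _
      rw [pow_add, ← pow_mul, ← pow_mul]
    have hmod : x1 * s + x2 * t ≡ x1 * s' + x2 * t' [MOD N] := by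
      rw [← hαuord, ← pow_eq_pow_iff_modEq]
      apply Units.ext
      push_cast [hαu]
      simp only [Units.val_mk0]
      rw [← hkeyst, ← hkeyst]
      exact heq
    have hdvd : (N : ℤ) ∣ ((x1 * s + x2 * t : ℕ) : ℤ) - ((x1 * s' + x2 * t' : ℕ) : ℤ) :=
      hmod.symm.dvd
    set c : ℤ := (x1 : ℤ) * s - (x1 : ℤ) * s' with hc
    have hc1 : (Nat.gcd x1 N : ℤ) ∣ c := by
      have h1 : (Nat.gcd x1 N : ℤ) ∣ (x1 : ℤ) := Int.natCast_dvd_natCast.mpr (Nat.gcd_dvd_left _ _)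
      exact dvd_sub (h1.mul_right _) (h1.mul_right _)
    have hc2 : (Nat.gcd x2 N : ℤ) ∣ c := by
      have hrw : c = ((x2 : ℤ) * t' - (x2 : ℤ) * t)
          + (((x1 * s + x2 * t : ℕ) : ℤ) - ((x1 * s' + x2 * t' : ℕ) : ℤ)) := by
        push_cast; ring
      rw [hrw]
      have h1 : (Nat.gcd x2 N : ℤ) ∣ (x2 : ℤ) := Int.natCast_dvd_natCast.mpr (Nat.gcd_dvd_left _ _)
      have h2 : (Nat.gcd x2 N : ℤ) ∣ (N : ℤ) := Int.natCast_dvd_natCast.mpr (Nat.gcd_dvd_right _ _)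
      exact dvd_add (dvd_sub (h1.mul_right _) (h1.mul_right _)) (h2.trans hdvd)
    have hNc : (N : ℤ) ∣ c := by
      rw [Int.natCast_dvd] at hc1 hc2 ⊢
      rw [← hkey]
      exact Nat.lcm_dvd hc1 hc2
    have hss' : x1 * s ≡ x1 * s' [MOD N] := by
      rw [Nat.modEq_iff_dvd]
      have := (dvd_neg.mpr hNc)
      convert this using 1
      · rfl
      · push_cast [hc]; ring
    have hs : s = s' := by
      have hx1ss : (αu ^ x1) ^ s = (αu ^ x1) ^ s' := by
        rw [← pow_mul, ← pow_mul, pow_eq_pow_iff_modEq, hαuord]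
        exact hss'
      have := pow_eq_pow_iff_modEq.mp hx1ss
      rw [hr1u] at this
      exact eq_of_modEq_Icc this hst.1.1 (le_trans hst.1.2 hr1') hst'.1.1
        (le_trans hst'.1.2 hr1')
    have ht : t = t' := by
      rw [hs] at heq
      have h2 : ξ2 ^ t = ξ2 ^ t' := mul_left_cancel₀ (pow_ne_zero _ hξ10) heq
      have h2u : (αu ^ x2) ^ t = (αu ^ x2) ^ t' := by
        apply Units.ext
        push_cast [hαu]
        simpa using h2
      have := pow_eq_pow_iff_modEq.mp h2u
      rw [hr2u] at this
      exact eq_of_modEq_Icc this hst.2.1 hst.2.2 hst'.2.1 hst'.2.2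
    exact Prod.ext hs ht
  -- Gauss sums
  set S1 : ℕ := ∑ i ∈ Icc 1 r1, i with hS1def
  set S2 : ℕ := ∑ i ∈ Icc 1 r2, i with hS2def
  have hg1 : S1 * 2 = r1 * (r1 + 1) := gauss_aux r1
  have hg2 : S2 * 2 = r2 * (r2 + 1) := gauss_aux r2
  have hE1 : r1 * (r1 + 1) * r2 / 2 = S1 * r2 := by
    have h : r1 * (r1 + 1) * r2 = S1 * r2 * 2 := by rw [← hg1]; ring
    rw [h, Nat.mul_div_cancel _ two_pos]
  have hE2 : r2 * (r2 + 1) * r1 / 2 = S2 * r1 := by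
    have h : r2 * (r2 + 1) * r1 = S2 * r1 * 2 := by rw [← hg2]; ring
    rw [h, Nat.mul_div_cancel _ two_pos]
  -- card
  have hcard : (Icc 1 r1 ×ˢ Icc 1 r2).card = n := by
    simp [Finset.card_product, Nat.card_Icc]; rfl
  -- the product
  have hprod : (∏ b ∈ A, (0 - b)⁻¹)
      = (-1 : GaloisField p e) ^ n * (ξ1 ^ (S1 * r2))⁻¹ * (ξ2 ^ (S2 * r1))⁻¹ := by
    show (∏ b ∈ (Icc 1 r1 ×ˢ Icc 1 r2).image (fun st => ξ1 ^ st.1 * ξ2 ^ st.2), (0 - b)⁻¹) = _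
    rw [Finset.prod_image hinj]
    have step1 : (∏ st ∈ Icc 1 r1 ×ˢ Icc 1 r2, (0 - (ξ1 ^ st.1 * ξ2 ^ st.2))⁻¹)
        = (∏ st ∈ Icc 1 r1 ×ˢ Icc 1 r2, ((-1 : GaloisField p e) * (ξ1 ^ st.1 * ξ2 ^ st.2)))⁻¹ := by
      rw [← Finset.prod_inv_distrib]
      apply Finset.prod_congr rfl
      intro st _
      rw [zero_sub, neg_one_mul]
    rw [step1, Finset.prod_mul_distrib, Finset.prod_const, hcard,
      Finset.prod_mul_distrib, Finset.prod_pow_eq_pow_sum, Finset.prod_pow_eq_pow_sum]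
    have hsum1 : (∑ st ∈ Icc 1 r1 ×ˢ Icc 1 r2, st.1) = S1 * r2 := by
      rw [Finset.sum_product]
      simp only [Finset.sum_const, Nat.card_Icc, smul_eq_mul, Nat.add_sub_cancel]
      rw [← Finset.mul_sum, ← hS1def, mul_comm]
    have hsum2 : (∑ st ∈ Icc 1 r1 ×ˢ Icc 1 r2, st.2) = S2 * r1 := by
      rw [Finset.sum_product]
      simp only [← hS2def, Finset.sum_const, Nat.card_Icc, smul_eq_mul, Nat.add_sub_cancel]
      rw [mul_comm]
    rw [hsum1, hsum2]
    have hneg1 : (((-1 : GaloisField p e) ^ n)⁻¹) = (-1 : GaloisField p e) ^ n :=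
      inv_eq_of_mul_eq_one_right (by rw [← mul_pow]; simp)
    rw [mul_inv, mul_inv, hneg1, mul_assoc]
  have hXeq : (∏ b ∈ A, (0 - b)⁻¹)
      = (-1 : GaloisField p e) ^ n * (ξ1 ^ (r1 * (r1 + 1) * r2 / 2))⁻¹ *
          (ξ2 ^ (r2 * (r2 + 1) * r1 / 2))⁻¹ := by
    rw [hE1, hE2]; exact hprod
  have hαdvd : ∀ m : ℕ, N ∣ m → α ^ m = 1 := by
    rintro m ⟨k, rfl⟩
    rw [pow_mul, hαN, one_pow]
  have hξ1E : (ξ1 ^ (S1 * r2)) ^ (p ^ l - 1) = 1 := by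
    show ((α ^ x1) ^ (S1 * r2)) ^ (p ^ l - 1) = 1
    rw [← pow_mul, ← pow_mul]
    apply hαdvd
    have hbase : N ∣ x1 * (p ^ l - 1) * r2 := by
      rw [← hd2r2]
      refine Nat.mul_dvd_mul ?_ dvd_rfl
      rw [Nat.gcd_comm]
      exact hgcd
    have hrw : x1 * (S1 * r2 * (p ^ l - 1)) = x1 * (p ^ l - 1) * r2 * S1 := by ring
    rw [hrw]
    exact hbase.mul_right _
  have h2dvd : 2 ∣ (r2 + 1) * (p ^ l - 1) := by
    rcases hp.eq_two_or_odd' with h2 | hodd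
    · have h2e : 2 ∣ p ^ e := by rw [h2]; exact dvd_pow_self 2 he.ne'
      rcases Nat.even_or_odd r2 with hev | hod
      · exfalso
        obtain ⟨a, ha⟩ := hev.two_dvd.trans hr2N
        obtain ⟨b, hb⟩ := h2e
        omega
      · exact dvd_mul_of_dvd_left hod.add_one.two_dvd _
    · have : 2 ∣ p ^ l - 1 := by
        obtain ⟨a, ha⟩ := hodd.pow (n := l)
        omega
      exact dvd_mul_of_dvd_right this _
  have hξ2E : (ξ2 ^ (S2 * r1)) ^ (p ^ l - 1) = 1 := by
    show ((α ^ x2) ^ (S2 * r1)) ^ (p ^ l - 1) = 1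
    rw [← pow_mul, ← pow_mul]
    apply hαdvd
    obtain ⟨w, hw⟩ := h2dvd
    have hrw : x2 * (S2 * r1 * (p ^ l - 1)) = x2 * r2 * (w * r1) := by
      apply Nat.eq_of_mul_eq_mul_left (show 0 < 2 by norm_num)
      calc 2 * (x2 * (S2 * r1 * (p ^ l - 1))) = x2 * (S2 * 2) * r1 * (p ^ l - 1) := by ring
        _ = x2 * (r2 * (r2 + 1)) * r1 * (p ^ l - 1) := by rw [hg2]
        _ = x2 * r2 * ((r2 + 1) * (p ^ l - 1)) * r1 := by ring
        _ = x2 * r2 * (2 * w) * r1 := by rw [hw]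
        _ = 2 * (x2 * r2 * (w * r1)) := by ring
    rw [hrw]
    exact hNr2.mul_right _
  have hnegpow : (((-1 : GaloisField p e) ^ n)) ^ (p ^ l - 1) = 1 := by
    rcases hp.eq_two_or_odd' with h2 | hodd
    · subst h2
      have hchar : ((2 : ℕ) : GaloisField 2 e) = 0 := CharP.cast_eq_zero _ 2
      have h2' : (2 : GaloisField 2 e) = 0 := by exact_mod_cast hchar
      have h1 : (-1 : GaloisField 2 e) = 1 := by linear_combination -h2'
      rw [h1, one_pow, one_pow]
    · have heven : Even (p ^ l - 1) := by
        obtain ⟨a, ha⟩ := hodd.pow (n := l)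
        exact ⟨a, by omega⟩
      rw [← pow_mul]
      exact (heven.mul_left n).neg_one_pow
  refine ⟨hXeq, ?_, ?_⟩
  · rw [hXeq]
    exact mul_ne_zero (mul_ne_zero (pow_ne_zero _ (neg_ne_zero.mpr one_ne_zero))
      (inv_ne_zero (pow_ne_zero _ hξ10))) (inv_ne_zero (pow_ne_zero _ hξ20))
  · have hX1 : (∏ b ∈ A, (0 - b)⁻¹) ^ (p ^ l - 1) = 1 := by
      rw [hprod, mul_pow, mul_pow, hnegpow, inv_pow, inv_pow, hξ1E, hξ2E, inv_one]
      simp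
    have hpl1 : 1 ≤ p ^ l := Nat.one_le_pow _ _ hp.pos
    calc (∏ b ∈ A, (0 - b)⁻¹) ^ p ^ l
        = (∏ b ∈ A, (0 - b)⁻¹) ^ (p ^ l - 1 + 1) := by rw [Nat.sub_add_cancel hpl1]
      _ = ∏ b ∈ A, (0 - b)⁻¹ := by rw [pow_succ, hX1, one_mul]
end
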